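/- Let t be a positive integer, d = 2t−1, G = K_{2t} minus a perfect matching, and J_t the strong product of d copies of G. Then the set A = {(v,v,…,v) : v ∈ V(G)} of d+1 diagonal vertices is a dominating set of J_t; hence γ(J_t) = 2t. -/

import Mathlib

open Finset

namespace SG

variable {V : Type*}

/-- Closed neighborhood of a vertex as a `Finset`. -/
def closedNbhd [Fintype V] [DecidableEq V] (G : SimpleGraph V) [DecidableRel G.Adj]
    (v : V) : Finset V :=
  insert v (G.neighborFinset v)

/-- A fractional domination: weights in `[0,1]` with each closed neighborhood of weight `≥ 1`. -/
def IsFracDom [Fintype V] [DecidableEq V] (G : SimpleGraph V) [DecidableRel G.Adj]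
    (f : V → ℝ) : Prop :=
  (∀ v, 0 ≤ f v ∧ f v ≤ 1) ∧ ∀ v, 1 ≤ ∑ u ∈ closedNbhd G v, f u

/-- The fractional domination number. -/
noncomputable def fracDomNumber [Fintype V] [DecidableEq V] (G : SimpleGraph V)
    [DecidableRel G.Adj] : ℝ :=
  sInf {x | ∃ f, IsFracDom G f ∧ x = ∑ v, f v}

/-- A dominating set: every vertex not in `S` is adjacent to some vertex of `S`. -/
def IsDomSet (G : SimpleGraph V) (S : Finset V) : Prop :=
  ∀ v, v ∉ S → ∃ u ∈ S, G.Adj u v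

/-- The domination number. -/
noncomputable def domNumber [Fintype V] (G : SimpleGraph V) : ℕ :=
  sInf {k | ∃ S : Finset V, S.card = k ∧ IsDomSet G S}


/-- `K_{2t}` minus a perfect matching: vertices `0,…,2t-1`, with the matching
pairing `2k` with `2k+1`; two vertices are adjacent iff they lie in different
matching pairs. -/
def Kmm (t : ℕ) : SimpleGraph (Fin (2 * t)) where
  Adj i j := (i : ℕ) / 2 ≠ (j : ℕ) / 2
  symm := ⟨fun _ _ h => Ne.symm h⟩
  loopless := ⟨fun _ h => h rfl⟩

instance (t : ℕ) : DecidableRel (Kmm t).Adj :=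
  fun i j => inferInstanceAs (Decidable ((i : ℕ) / 2 ≠ (j : ℕ) / 2))

/-- `J_t`: the strong product of `d = 2t - 1` copies of `K_{2t}` minus a
perfect matching.  Distinct tuples are adjacent iff they are componentwise
equal-or-adjacent. -/
def Jt (t : ℕ) : SimpleGraph (Fin (2 * t - 1) → Fin (2 * t)) where
  Adj x y := x ≠ y ∧ ∀ i, x i = y i ∨ (Kmm t).Adj (x i) (y i)
  symm := by
    constructor
    rintro x y ⟨h1, h2⟩
    exact ⟨Ne.symm h1, fun i => (h2 i).imp Eq.symm fun a => (Kmm t).adj_symm a⟩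
  loopless := ⟨fun x h => h.1 rfl⟩

instance (t : ℕ) : DecidableRel (Jt t).Adj :=
  fun x y =>
    inferInstanceAs (Decidable (x ≠ y ∧ ∀ i, x i = y i ∨ (Kmm t).Adj (x i) (y i)))


/-- The matching partner of a vertex of `Kmm t`. -/
def partner (t : ℕ) (b : Fin (2 * t)) : Fin (2 * t) :=
  ⟨if (b : ℕ) % 2 = 0 then (b : ℕ) + 1 else (b : ℕ) - 1, by
    have hb := b.isLt
    split_ifs with h <;> omega⟩

lemma partner_ne (t : ℕ) (b : Fin (2 * t)) : partner t b ≠ b := by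
  have hb := b.isLt
  simp only [partner, Fin.ne_iff_vne]
  split_ifs with h <;> omega

lemma partner_div (t : ℕ) (b : Fin (2 * t)) :
    ((partner t b : Fin (2 * t)) : ℕ) / 2 = (b : ℕ) / 2 := by
  have hb := b.isLt
  simp only [partner]
  split_ifs with h <;> omega

lemma partner_uniq (t : ℕ) (a b : Fin (2 * t)) (hne : a ≠ b)
    (hdiv : (a : ℕ) / 2 = (b : ℕ) / 2) : a = partner t b := by
  have ha := a.isLt
  have hb := b.isLt
  have hne' : (a : ℕ) ≠ (b : ℕ) := fun h => hne (Fin.ext h)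
  apply Fin.ext
  simp only [partner]
  split_ifs with h <;> omega

/-- The diagonal dominates. -/
lemma diag_dominates (t : ℕ) (ht : 1 ≤ t) :
    IsDomSet (Jt t)
        ((Finset.univ : Finset (Fin (2 * t))).image
          fun v => (fun _ => v : Fin (2 * t - 1) → Fin (2 * t))) := by
  intro x hx
  -- bad vertices: partners of the coordinates of x
  set B : Finset (Fin (2 * t)) :=
    (Finset.univ : Finset (Fin (2 * t - 1))).image (fun i => partner t (x i)) with hB
  have hcard : B.card < Fintype.card (Fin (2 * t)) := by
    calc B.card ≤ (Finset.univ : Finset (Fin (2 * t - 1))).card := Finset.card_image_le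
    _ = 2 * t - 1 := by simp
    _ < Fintype.card (Fin (2 * t)) := by simp; omega
  have hne : ((Finset.univ : Finset (Fin (2 * t))) \ B).Nonempty := by
    rw [Finset.sdiff_nonempty]
    intro hsub
    have := Finset.card_le_card hsub
    simp only [Finset.card_univ] at this
    omega
  obtain ⟨v, hv⟩ := hne
  have hvB : v ∉ B := (Finset.mem_sdiff.mp hv).2
  refine ⟨fun _ => v, Finset.mem_image_of_mem _ (Finset.mem_univ v), ?_, fun i => ?_⟩
  · intro h
    exact hx (h ▸ Finset.mem_image_of_mem _ (Finset.mem_univ v))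
  · by_cases he : v = x i
    · exact Or.inl he
    · refine Or.inr ?_
      intro hdiv
      have := partner_uniq t v (x i) he hdiv
      exact hvB (this ▸ Finset.mem_image_of_mem _ (Finset.mem_univ i))

/-- Lower bound: any dominating set has at least `2t` vertices. -/
lemma dom_lower (t : ℕ) (ht : 1 ≤ t) (S : Finset (Fin (2 * t - 1) → Fin (2 * t)))
    (hS : IsDomSet (Jt t) S) : 2 * t ≤ S.card := by
  classical
  by_contra hlt
  push_neg at hlt
  have hcard : Fintype.card (↥S) ≤ Fintype.card (Fin (2 * t - 1)) := by
    simp [Fintype.card_coe]; omega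
  obtain ⟨g⟩ := Function.Embedding.nonempty_of_card_le hcard
  -- build an undominated vertex
  let x : Fin (2 * t - 1) → Fin (2 * t) := fun i =>
    if h : ∃ u : ↥S, g u = i then partner t ((Classical.choose h).1 i)
    else ⟨0, by omega⟩
  have hxg : ∀ u : ↥S, x (g u) = partner t (u.1 (g u)) := by
    intro u
    have h : ∃ u' : ↥S, g u' = g u := ⟨u, rfl⟩
    have hu' : Classical.choose h = u := g.injective (Classical.choose_spec h)
    simp only [x, dif_pos h, hu']
  have hkey : ∀ u : ↥S, ¬ (u.1 (g u) = x (g u) ∨ (Kmm t).Adj (u.1 (g u)) (x (g u))) := by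
    intro u h
    rw [hxg u] at h
    rcases h with h | h
    · exact partner_ne t (u.1 (g u)) h.symm
    · exact h (partner_div t (u.1 (g u))).symm
  have hxS : x ∉ S := by
    intro hmem
    exact hkey ⟨x, hmem⟩ (Or.inl rfl)
  obtain ⟨u, hu, hadj⟩ := hS x hxS
  exact hkey ⟨u, hu⟩ (hadj.2 (g ⟨u, hu⟩))

/-- the `d + 1` diagonal vertices dominate `J_t`;
hence `γ(J_t) = 2t`. -/
theorem Jt_diagonal_dominates (t : ℕ) (ht : 1 ≤ t) :
    IsDomSet (Jt t)
        ((Finset.univ : Finset (Fin (2 * t))).image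
          fun v => (fun _ => v : Fin (2 * t - 1) → Fin (2 * t))) ∧
      domNumber (Jt t) = 2 * t := by
  have hdom := diag_dominates t ht
  refine ⟨hdom, ?_⟩
  have hinj : Function.Injective
      (fun v => (fun _ => v : Fin (2 * t - 1) → Fin (2 * t))) := by
    intro a b h
    exact congrFun h ⟨0, by omega⟩
  have hcard : ((Finset.univ : Finset (Fin (2 * t))).image
      (fun v => (fun _ => v : Fin (2 * t - 1) → Fin (2 * t)))).card = 2 * t := by
    rw [Finset.card_image_of_injective _ hinj]; simp
  have hmem : 2 * t ∈ {k | ∃ S : Finset (Fin (2 * t - 1) → Fin (2 * t)),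
      S.card = k ∧ IsDomSet (Jt t) S} := ⟨_, hcard, hdom⟩
  apply le_antisymm
  · exact Nat.sInf_le hmem
  · apply le_csInf ⟨_, hmem⟩
    rintro k ⟨S, rfl, hS⟩
    exact dom_lower t ht S hS

end SG
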